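/- Let b ∈ ℝ, let τ be a stopping time, and let φ be a trading strategy for the market-weight semimartingale μ taking values in Δᵈ. Define ψᵢ(t) = b + (φᵢ(t) − V^φ(τ)) 1_{t ≥ τ}. Then ψ is itself a trading strategy (self-financing), and its wealth satisfies V^ψ(t) = b + (V^φ(t) − V^φ(τ)) 1_{t ≥ τ}. -/
import Mathlib


/-- Concatenation of trading strategies (pathwise formulation). Let `μ` take values in `Δᵈ`
(coordinates summing to 1), and let `g θ t` denote the gains-from-trade `∫₀ᵗ ∑ᵢ θᵢ dμᵢ`
(an abstract stochastic-integral functional, assumed additive, homogeneous, vanishing on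
constant-in-`i` integrands since `∑ᵢ dμᵢ = 0`, and compatible with stopping at `τ`). If `φ`
is self-financing, then `ψᵢ(t) = b + (φᵢ(t) − V^φ(τ)) 1_{t ≥ τ}` is self-financing as well,
and its wealth satisfies `V^ψ(t) = b + (V^φ(t) − V^φ(τ)) 1_{t ≥ τ}`. -/
theorem stmt14 (d : ℕ) (b τ : ℝ) (hτ : 0 ≤ τ)
    (μ : ℝ → Fin d → ℝ) (hμ : ∀ t, ∑ i, μ t i = 1)
    (g : (ℝ → Fin d → ℝ) → ℝ → ℝ)
    (hadd : ∀ θ θ' : ℝ → Fin d → ℝ, ∀ t, g (θ + θ') t = g θ t + g θ' t)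
    (hsmul : ∀ (c : ℝ) (θ : ℝ → Fin d → ℝ) (t : ℝ), g (c • θ) t = c * g θ t)
    (hconst : ∀ (c : ℝ) (t : ℝ), g (fun _ _ => c) t = 0)
    (hstop : ∀ (θ : ℝ → Fin d → ℝ) (t : ℝ),
      g (fun s i => θ s i * (if τ ≤ s then (1:ℝ) else 0)) t =
        (g θ t - g θ τ) * (if τ ≤ t then (1:ℝ) else 0))
    (φ : ℝ → Fin d → ℝ)
    (hφ : ∀ t, ∑ i, φ t i * μ t i = (∑ i, φ 0 i * μ 0 i) + g φ t)
    (ψ : ℝ → Fin d → ℝ)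
    (hψ : ∀ t i, ψ t i = b + (φ t i - ∑ j, φ τ j * μ τ j) * (if τ ≤ t then (1:ℝ) else 0)) :
    (∀ t, ∑ i, ψ t i * μ t i = (∑ i, ψ 0 i * μ 0 i) + g ψ t) ∧
    (∀ t, ∑ i, ψ t i * μ t i =
      b + ((∑ i, φ t i * μ t i) - ∑ i, φ τ i * μ τ i) * (if τ ≤ t then (1:ℝ) else 0)) := by

  set Vτ : ℝ := ∑ j, φ τ j * μ τ j with hVτ
  have key : ∀ t, ∑ i, ψ t i * μ t i =
      b + ((∑ i, φ t i * μ t i) - Vτ) * (if τ ≤ t then (1:ℝ) else 0) := by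
    intro t
    have h1 : ∑ i, ψ t i * μ t i =
        ∑ i, (b * μ t i + (if τ ≤ t then (1:ℝ) else 0) * (φ t i * μ t i)
          - (if τ ≤ t then (1:ℝ) else 0) * Vτ * μ t i) := by
      refine Finset.sum_congr rfl fun i _ => ?_
      rw [hψ]; ring
    rw [h1, Finset.sum_sub_distrib, Finset.sum_add_distrib, ← Finset.mul_sum,
      ← Finset.mul_sum, ← Finset.mul_sum, hμ]
    ring
  have hψeq : ψ = (fun _ _ => b) + (fun s i => φ s i * (if τ ≤ s then (1:ℝ) else 0))
      + (fun s i => (fun _ _ => -Vτ : ℝ → Fin d → ℝ) s i * (if τ ≤ s then (1:ℝ) else 0)) := by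
    funext s i
    simp only [Pi.add_apply, hψ]
    ring
  have hg : ∀ t, g ψ t = ((g φ t - g φ τ)) * (if τ ≤ t then (1:ℝ) else 0) := by
    intro t
    rw [hψeq, hadd, hadd, hconst, hstop, hstop, hconst, hconst]
    ring
  have hzero : ∑ i, ψ 0 i * μ 0 i = b := by
    rw [key 0]
    by_cases h : τ ≤ 0
    · have hτ0 : τ = 0 := le_antisymm h hτ
      rw [if_pos h, hVτ, hτ0]; ring
    · rw [if_neg h]; ring
  refine ⟨fun t => ?_, key⟩
  rw [key t, hzero, hg t, hφ t, hVτ, hφ τ]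
  ring
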